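/- In any mixed Nash equilibrium of the routing game (p₁>α, p₂>1, Assumption 1), for every minimum s–t cut E({S,T}) and every edge (i,j)∈E({S,T}), there exists a flow x in the support of the defender's equilibrium strategy with x_{ij}>0. -/

import Mathlib

open scoped BigOperators Classical

/-- A capacitated network given by its finite edge set, capacities, per-unit
transportation costs, and the (edge sets of its) `s`-`t` paths and loops. -/
structure Network where
  E : Type
  fin : Fintype E
  dec : DecidableEq E
  /-- edge capacities -/
  c : E → ℝ
  /-- per-unit transportation costs -/
  b : E → ℝ
  /-- the `s`-`t` paths, identified with their edge sets -/
  P : Finset (Finset E)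
  /-- the loops, identified with their edge sets -/
  L : Finset (Finset E)
  c_nonneg : ∀ e, 0 ≤ c e
  b_nonneg : ∀ e, 0 ≤ b e
  P_nonempty : P.Nonempty
  P_edges_nonempty : ∀ p ∈ P, p.Nonempty

attribute [instance] Network.fin Network.dec

namespace Network

variable (N : Network)

/-- All paths and loops. -/
noncomputable def Lam : Finset (Finset N.E) := N.P ∪ N.L

/-- The flow through edge `e` induced by the path/loop flow `y`. -/
noncomputable def edgeFlow (y : Finset N.E → ℝ) (e : N.E) : ℝ :=
  ∑ l ∈ N.Lam.filter (fun l => e ∈ l), y l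

/-- Feasibility of a path/loop flow: nonnegative, supported on paths and loops,
and respecting edge capacities. -/
def Feasible (y : Finset N.E → ℝ) : Prop :=
  (∀ l, 0 ≤ y l) ∧ (∀ l, l ∉ N.Lam → y l = 0) ∧ (∀ e, N.edgeFlow y e ≤ N.c e)

/-- The value `F(x)` of the initial flow: total flow on `s`-`t` paths. -/
noncomputable def val (y : Finset N.E → ℝ) : ℝ := ∑ p ∈ N.P, y p

/-- The value `F(x^μ)` of the effective flow after the attack `μ`:
only the flow on paths avoiding all disrupted edges survives. -/
noncomputable def effVal (y : Finset N.E → ℝ) (μ : Finset N.E) : ℝ :=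
  ∑ p ∈ N.P.filter (fun p => Disjoint p μ), y p

/-- Transportation cost `C₁(x) = Σ b_e x_e`. -/
noncomputable def C1 (y : Finset N.E → ℝ) : ℝ := ∑ e, N.b e * N.edgeFlow y e

/-- Cost of an attack, `C₂(μ) = Σ_{e ∈ μ} c_e`. -/
noncomputable def C2 (μ : Finset N.E) : ℝ := ∑ e ∈ μ, N.c e

/-- Transportation cost of a path. -/
noncomputable def pathCost (p : Finset N.E) : ℝ := ∑ e ∈ p, N.b e

/-- `α`: the minimum transportation cost over all `s`-`t` paths. -/
noncomputable def alpha : ℝ := sInf (N.pathCost '' ↑N.P)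

/-- A cut: a set of edges meeting every `s`-`t` path. -/
def IsCut (K : Finset N.E) : Prop := ∀ p ∈ N.P, ¬ Disjoint p K

/-- A minimum cut: a cut of minimum capacity. -/
def IsMinCut (K : Finset N.E) : Prop := N.IsCut K ∧ ∀ K', N.IsCut K' → N.C2 K ≤ N.C2 K'

/-- `Θ`: the maximum flow value. -/
noncomputable def Theta : ℝ := sSup (N.val '' {y | N.Feasible y})

/-- A maximum flow. -/
def IsMaxFlow (y : Finset N.E → ℝ) : Prop :=
  N.Feasible y ∧ ∀ z, N.Feasible z → N.val z ≤ N.val y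

/-- A maximum flow with minimum transportation cost (an element of `Ω`). -/
def IsMFMC (y : Finset N.E → ℝ) : Prop :=
  N.IsMaxFlow y ∧ ∀ z, N.IsMaxFlow z → N.C1 y ≤ N.C1 z

/-- Assumption 1: `x` is a max-flow with minimum transportation cost all of whose
positively used `s`-`t` paths have transportation cost exactly `α`. -/
def Assumption1 (x : Finset N.E → ℝ) : Prop :=
  N.IsMFMC x ∧ ∀ p ∈ N.P, 0 < x p → N.pathCost p = N.alpha

/-- Defender's payoff `u₁(x,μ) = p₁ F(x^μ) - C₁(x)`. -/
noncomputable def u1 (p1 : ℝ) (y : Finset N.E → ℝ) (μ : Finset N.E) : ℝ :=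
  p1 * N.effVal y μ - N.C1 y

/-- Attacker's payoff `u₂(x,μ) = p₂ F(x - x^μ) - C₂(μ)`. -/
noncomputable def u2 (p2 : ℝ) (y : Finset N.E → ℝ) (μ : Finset N.E) : ℝ :=
  p2 * (N.val y - N.effVal y μ) - N.C2 μ

/-- The defender's action set: feasible flows. -/
def Flow : Type := {y : Finset N.E → ℝ // N.Feasible y}

/-- A (finitely supported) mixed strategy of the defender. -/
def MixedF (σ : N.Flow →₀ ℝ) : Prop := (∀ y, 0 ≤ σ y) ∧ (σ.sum fun _ w => w) = 1

/-- A mixed strategy of the attacker. -/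
def MixedA (σ : Finset N.E → ℝ) : Prop := (∀ μ, 0 ≤ σ μ) ∧ ∑ μ, σ μ = 1

/-- Expectation of a function of the flow under the defender's mixed strategy. -/
noncomputable def expF (σ : N.Flow →₀ ℝ) (g : (Finset N.E → ℝ) → ℝ) : ℝ :=
  σ.sum fun y w => w * g y.1

/-- Expectation of a function of the attack under the attacker's mixed strategy. -/
noncomputable def expA (σ : Finset N.E → ℝ) (h : Finset N.E → ℝ) : ℝ :=
  ∑ μ, σ μ * h μ

/-- Expectation of a function of both actions under a mixed strategy profile. -/
noncomputable def expFA (σ1 : N.Flow →₀ ℝ) (σ2 : Finset N.E → ℝ)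
    (g : (Finset N.E → ℝ) → Finset N.E → ℝ) : ℝ :=
  σ1.sum fun y w => w * ∑ μ, σ2 μ * g y.1 μ

/-- Defender's expected payoff. -/
noncomputable def U1 (p1 : ℝ) (σ1 : N.Flow →₀ ℝ) (σ2 : Finset N.E → ℝ) : ℝ :=
  N.expFA σ1 σ2 (N.u1 p1)

/-- Attacker's expected payoff. -/
noncomputable def U2 (p2 : ℝ) (σ1 : N.Flow →₀ ℝ) (σ2 : Finset N.E → ℝ) : ℝ :=
  N.expFA σ1 σ2 (N.u2 p2)

/-- Mixed Nash equilibrium. -/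
def IsNE (p1 p2 : ℝ) (σ1 : N.Flow →₀ ℝ) (σ2 : Finset N.E → ℝ) : Prop :=
  N.MixedF σ1 ∧ N.MixedA σ2 ∧
  (∀ τ1, N.MixedF τ1 → N.U1 p1 τ1 σ2 ≤ N.U1 p1 σ1 σ2) ∧
  (∀ τ2, N.MixedA τ2 → N.U2 p2 σ1 τ2 ≤ N.U2 p2 σ1 σ2)

/-- Pure Nash equilibrium. -/
def IsPureNE (p1 p2 : ℝ) (x : Finset N.E → ℝ) (μ : Finset N.E) : Prop :=
  N.Feasible x ∧
  (∀ y, N.Feasible y → N.u1 p1 y μ ≤ N.u1 p1 x μ) ∧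
  (∀ ν, N.u2 p2 x ν ≤ N.u2 p2 x μ)

end Network

namespace Network

variable {N : Network}

lemma pathCost_nonneg (l : Finset N.E) : 0 ≤ N.pathCost l :=
  Finset.sum_nonneg fun e _ => N.b_nonneg e

lemma alpha_nonneg : 0 ≤ N.alpha := by
  obtain ⟨p, hp⟩ := N.P_nonempty
  refine le_csInf ⟨N.pathCost p, ⟨p, by simpa using hp, rfl⟩⟩ ?_
  rintro r ⟨q, _, rfl⟩
  exact pathCost_nonneg q

lemma alpha_le_pathCost {p : Finset N.E} (hp : p ∈ N.P) : N.alpha ≤ N.pathCost p :=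
  csInf_le (Set.Finite.bddBelow (N.P.finite_toSet.image N.pathCost))
    ⟨p, by simpa using hp, rfl⟩

lemma P_subset_Lam : N.P ⊆ N.Lam := by
  unfold Lam; exact Finset.subset_union_left

lemma edgeFlow_nonneg {y : Finset N.E → ℝ} (hy : N.Feasible y) (e : N.E) :
    0 ≤ N.edgeFlow y e :=
  Finset.sum_nonneg fun l _ => hy.1 l

lemma feasible_zero : N.Feasible (fun _ => (0:ℝ)) := by
  refine ⟨fun _ => le_rfl, fun _ _ => rfl, fun e => ?_⟩
  simpa [edgeFlow] using N.c_nonneg e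

lemma u1_zero (p1 : ℝ) (μ : Finset N.E) : N.u1 p1 (fun _ => (0:ℝ)) μ = 0 := by
  simp [u1, effVal, C1, edgeFlow]

lemma C1_eq_sum (y : Finset N.E → ℝ) :
    N.C1 y = ∑ l ∈ N.Lam, y l * N.pathCost l := by
  unfold C1 edgeFlow pathCost
  calc ∑ e, N.b e * ∑ l ∈ N.Lam.filter (fun l => e ∈ l), y l
      = ∑ e, ∑ l ∈ N.Lam, if e ∈ l then N.b e * y l else 0 := by
        refine Finset.sum_congr rfl fun e _ => ?_
        rw [Finset.mul_sum, Finset.sum_filter]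
    _ = ∑ l ∈ N.Lam, ∑ e, if e ∈ l then N.b e * y l else 0 := Finset.sum_comm
    _ = ∑ l ∈ N.Lam, y l * ∑ e ∈ l, N.b e := by
        refine Finset.sum_congr rfl fun l _ => ?_
        rw [← Finset.sum_filter, Finset.filter_univ_mem, Finset.mul_sum]
        exact Finset.sum_congr rfl fun e _ => mul_comm _ _

lemma alpha_val_le_C1 {y : Finset N.E → ℝ} (hy : N.Feasible y) :
    N.alpha * N.val y ≤ N.C1 y := by
  rw [C1_eq_sum, val, Finset.mul_sum]
  calc ∑ p ∈ N.P, N.alpha * y p ≤ ∑ p ∈ N.P, y p * N.pathCost p := by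
        refine Finset.sum_le_sum fun p hp => ?_
        rw [mul_comm]
        exact mul_le_mul_of_nonneg_left (alpha_le_pathCost hp) (hy.1 p)
    _ ≤ ∑ l ∈ N.Lam, y l * N.pathCost l := by
        refine Finset.sum_le_sum_of_subset_of_nonneg P_subset_Lam
          fun l _ _ => mul_nonneg (hy.1 l) (pathCost_nonneg l)

lemma val_sub_effVal_le_C2 {y : Finset N.E → ℝ} (hy : N.Feasible y) (μ : Finset N.E) :
    N.val y - N.effVal y μ ≤ N.C2 μ := by
  have hsplit : N.effVal y μ + ∑ p ∈ N.P.filter (fun p => ¬ Disjoint p μ), y p = N.val y :=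
    Finset.sum_filter_add_sum_filter_not N.P _ _
  have key : ∑ p ∈ N.P.filter (fun p => ¬ Disjoint p μ), y p
      ≤ ∑ e' ∈ μ, N.edgeFlow y e' := by
    calc ∑ p ∈ N.P.filter (fun p => ¬ Disjoint p μ), y p
        ≤ ∑ p ∈ N.P.filter (fun p => ¬ Disjoint p μ), ∑ e' ∈ μ.filter (fun e' => e' ∈ p), y p := by
          refine Finset.sum_le_sum fun p hp => ?_
          obtain ⟨a, hap, haμ⟩ := Finset.not_disjoint_iff.mp (Finset.mem_filter.mp hp).2
          have hne : (μ.filter (fun e' => e' ∈ p)).Nonempty :=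
            ⟨a, Finset.mem_filter.mpr ⟨haμ, hap⟩⟩
          rw [Finset.sum_const, nsmul_eq_mul]
          have h1 : (1:ℝ) ≤ (μ.filter (fun e' => e' ∈ p)).card := by
            exact_mod_cast Finset.card_pos.mpr hne
          nlinarith [hy.1 p]
      _ = ∑ p ∈ N.P.filter (fun p => ¬ Disjoint p μ), ∑ e' ∈ μ, if e' ∈ p then y p else 0 := by
          refine Finset.sum_congr rfl fun p _ => ?_
          rw [Finset.sum_filter]
      _ = ∑ e' ∈ μ, ∑ p ∈ N.P.filter (fun p => ¬ Disjoint p μ), if e' ∈ p then y p else 0 :=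
          Finset.sum_comm
      _ = ∑ e' ∈ μ, ∑ p ∈ (N.P.filter (fun p => ¬ Disjoint p μ)).filter (fun p => e' ∈ p), y p := by
          refine Finset.sum_congr rfl fun e' _ => ?_
          exact (Finset.sum_filter _ _).symm
      _ ≤ ∑ e' ∈ μ, N.edgeFlow y e' := by
          refine Finset.sum_le_sum fun e' _ => ?_
          refine Finset.sum_le_sum_of_subset_of_nonneg ?_ fun l _ _ => hy.1 l
          intro p hp
          simp only [Finset.mem_filter] at hp ⊢
          exact ⟨P_subset_Lam hp.1.1, hp.2⟩
  have hcap : ∑ e' ∈ μ, N.edgeFlow y e' ≤ N.C2 μ :=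
    Finset.sum_le_sum fun e' _ => hy.2.2 e'
  linarith

lemma val_eq_Theta {x : Finset N.E → ℝ} (hx : N.IsMaxFlow x) : N.val x = N.Theta := by
  have h : IsGreatest (N.val '' {y | N.Feasible y}) (N.val x) :=
    ⟨⟨x, hx.1, rfl⟩, by rintro r ⟨z, hz, rfl⟩; exact hx.2 z hz⟩
  rw [Theta, h.csSup_eq]

lemma C1_le_alpha_Theta {x : Finset N.E → ℝ} (hx : N.Assumption1 x) :
    N.C1 x ≤ N.alpha * N.Theta := by
  classical
  set x' : Finset N.E → ℝ := fun l => if l ∈ N.P then x l else 0 with hx'def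
  have hfx : N.Feasible x := hx.1.1.1
  have hfeas : N.Feasible x' := by
    refine ⟨fun l => ?_, fun l hl => ?_, fun e => ?_⟩
    · by_cases h : l ∈ N.P <;> simp [hx'def, h, hfx.1 l]
    · have : l ∉ N.P := fun h => hl (P_subset_Lam h)
      simp [hx'def, this]
    · refine le_trans ?_ (hfx.2.2 e)
      refine Finset.sum_le_sum fun l _ => ?_
      by_cases h : l ∈ N.P <;> simp [hx'def, h, hfx.1 l]
  have hval : N.val x' = N.val x := by
    refine Finset.sum_congr rfl fun p hp => ?_
    simp [hx'def, hp]
  have hmax : N.IsMaxFlow x' := ⟨hfeas, fun z hz => by rw [hval]; exact hx.1.1.2 z hz⟩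
  have hle : N.C1 x ≤ N.C1 x' := hx.1.2 x' hmax
  have hC1x' : N.C1 x' = ∑ p ∈ N.P, x p * N.pathCost p := by
    rw [C1_eq_sum]
    rw [show ∑ l ∈ N.Lam, x' l * N.pathCost l
        = ∑ l ∈ N.Lam, if l ∈ N.P then x l * N.pathCost l else 0 from
      Finset.sum_congr rfl fun l _ => by by_cases h : l ∈ N.P <;> simp [hx'def, h]]
    rw [← Finset.sum_filter, Finset.filter_mem_eq_inter,
      Finset.inter_eq_right.mpr P_subset_Lam]
  have hαp : ∑ p ∈ N.P, x p * N.pathCost p = N.alpha * N.val x := by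
    rw [val, Finset.mul_sum]
    refine Finset.sum_congr rfl fun p hp => ?_
    rcases lt_or_eq_of_le (hfx.1 p) with h | h
    · rw [hx.2 p hp h]; ring
    · rw [← h]; ring
  rw [val_eq_Theta hx.1.1] at hαp
  rw [hC1x', hαp] at hle
  exact hle

end Network


/-- in any mixed Nash equilibrium (`p₁ > α`, `p₂ > 1`, Assumption 1,
min-cut edge capacities positive), for every minimum cut `K` and every edge `e ∈ K`,
there exists a flow in the support of the defender's equilibrium strategy with positive
flow through `e`. -/
theorem min_cut_edges_used_in_equilibrium (N : Network) (p1 p2 : ℝ)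
    (hp1 : N.alpha < p1) (hp2 : 1 < p2)
    (hA1 : ∃ x, N.Assumption1 x)
    (hMFMC : ∃ K', N.IsMinCut K' ∧ N.C2 K' = N.Theta)
    (σ1 : N.Flow →₀ ℝ) (σ2 : Finset N.E → ℝ)
    (hNE : N.IsNE p1 p2 σ1 σ2)
    (K : Finset N.E) (hK : N.IsMinCut K) (hc : ∀ e ∈ K, 0 < N.c e) :
    ∀ e ∈ K, ∃ y ∈ σ1.support, 0 < N.edgeFlow y.1 e := by
  classical
  obtain ⟨x, hx⟩ := hA1
  obtain ⟨K', hK', hK'T⟩ := hMFMC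
  obtain ⟨hM1, hM2, hD, hA⟩ := hNE
  have hp2' : (0:ℝ) < p2 := by linarith
  have hp2ne : p2 ≠ 0 := ne_of_gt hp2'
  have hα : 0 ≤ N.alpha := Network.alpha_nonneg
  have hp1' : (0:ℝ) < p1 := lt_of_le_of_lt hα hp1
  have hCK : N.C2 K = N.Theta := by
    have h1 : N.C2 K ≤ N.C2 K' := hK.2 K' hK'.1
    have h2 : N.C2 K' ≤ N.C2 K := hK'.2 K hK.1
    rw [← hK'T]; linarith
  have hfx : N.Feasible x := hx.1.1.1
  have hvx : N.val x = N.Theta := Network.val_eq_Theta hx.1.1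
  have hC1x : N.C1 x ≤ N.alpha * N.Theta := Network.C1_le_alpha_Theta hx
  have hs1 : ∑ y ∈ σ1.support, σ1 y = 1 := by
    have h := hM1.2; simpa [Finsupp.sum] using h
  intro e he
  by_contra hcon
  push_neg at hcon
  have hzero : ∀ y ∈ σ1.support, ∀ l, e ∈ l → y.1 l = 0 := by
    intro y hy l hel
    have hle : N.edgeFlow y.1 e ≤ 0 := hcon y hy
    by_cases hl : l ∈ N.Lam
    · have h1 : y.1 l ≤ N.edgeFlow y.1 e :=
        Finset.single_le_sum (fun l _ => y.2.1 l) (Finset.mem_filter.mpr ⟨hl, hel⟩)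
      have h2 := y.2.1 l
      linarith
    · exact y.2.2.1 l hl
  set V : ℝ := ∑ y ∈ σ1.support, σ1 y * N.val y.1 with hVdef
  set W1 : ℝ := ∑ y ∈ σ1.support, σ1 y * N.C1 y.1 with hWdef
  set t : ℝ := ∑ μ : Finset N.E, σ2 μ * N.C2 μ with htdef
  -- pure attacker strategies
  have pure_mixed : ∀ ν : Finset N.E, N.MixedA (fun μ => if μ = ν then 1 else 0) := by
    intro ν
    constructor
    · intro μ; dsimp only; split_ifs <;> norm_num
    · simp
  have hU2pure : ∀ ν : Finset N.E,
      N.U2 p2 σ1 (fun μ => if μ = ν then 1 else 0)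
        = σ1.sum fun y w => w * N.u2 p2 y.1 ν := by
    intro ν
    unfold Network.U2 Network.expFA
    refine Finsupp.sum_congr fun y _ => ?_
    congr 1
    simp [ite_mul]
  -- attacker deviation to ∅ :  0 ≤ U2*
  have hu2empty : ∀ y : N.Flow, N.u2 p2 y.1 ∅ = 0 := by
    intro y
    have heff : N.effVal y.1 ∅ = N.val y.1 := by
      unfold Network.effVal Network.val
      congr 1
      refine Finset.filter_true_of_mem fun p _ => Finset.disjoint_empty_right p
    unfold Network.u2
    rw [heff]
    simp [Network.C2]
  have hB0 : 0 ≤ N.U2 p2 σ1 σ2 := by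
    have h := hA _ (pure_mixed ∅)
    rw [hU2pure ∅] at h
    have hz : (σ1.sum fun y w => w * N.u2 p2 y.1 ∅) = 0 := by
      simp only [Finsupp.sum]
      exact Finset.sum_eq_zero fun y _ => by rw [hu2empty, mul_zero]
    rw [hz] at h
    exact h
  -- attacker deviation to K.erase e
  have hC2erase : N.C2 (K.erase e) = N.Theta - N.c e := by
    have h := Finset.sum_erase_add K N.c he
    unfold Network.C2 at hCK ⊢
    linarith
  have hBK : p2 * V - (N.Theta - N.c e) ≤ N.U2 p2 σ1 σ2 := by
    have h := hA _ (pure_mixed (K.erase e))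
    rw [hU2pure (K.erase e)] at h
    have hval : (σ1.sum fun y w => w * N.u2 p2 y.1 (K.erase e))
        = p2 * V - (N.Theta - N.c e) := by
      simp only [Finsupp.sum]
      have hcongr : ∀ y ∈ σ1.support, σ1 y * N.u2 p2 y.1 (K.erase e)
          = p2 * (σ1 y * N.val y.1) - (N.Theta - N.c e) * σ1 y := by
        intro y hy
        have heff : N.effVal y.1 (K.erase e) = 0 := by
          apply Finset.sum_eq_zero
          intro p hp
          obtain ⟨hpP, hdisj⟩ := Finset.mem_filter.mp hp
          obtain ⟨a, hap, haK⟩ := Finset.not_disjoint_iff.mp (hK.1 p hpP)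
          have hae : a = e := by
            by_contra hne
            exact (Finset.disjoint_left.mp hdisj hap) (Finset.mem_erase.mpr ⟨hne, haK⟩)
          exact hzero y hy p (hae ▸ hap)
        unfold Network.u2
        rw [heff, hC2erase]
        ring
      rw [Finset.sum_congr rfl hcongr, Finset.sum_sub_distrib, ← Finset.mul_sum,
        ← Finset.mul_sum, hs1, mul_one, hVdef]
    rw [hval] at h
    exact h
  -- defender deviation : play x with prob 1/p2, zero flow otherwise
  have hinv0 : (0:ℝ) ≤ 1/p2 := by positivity
  have hinv1 : 1/p2 ≤ 1 := by rw [div_le_one hp2']; linarith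
  set xF : N.Flow := ⟨x, hfx⟩ with hxF
  set zF : N.Flow := ⟨(fun _ => 0 : Finset N.E → ℝ), Network.feasible_zero⟩ with hzF
  set τ : N.Flow →₀ ℝ := Finsupp.single xF (1/p2) + Finsupp.single zF (1 - 1/p2) with hτdef
  have hτmixed : N.MixedF τ := by
    constructor
    · intro y
      rw [hτdef, Finsupp.add_apply, Finsupp.single_apply, Finsupp.single_apply]
      split_ifs <;> linarith
    · rw [hτdef, Finsupp.sum_add_index' (fun _ => rfl) (fun _ _ _ => rfl),
        Finsupp.sum_single_index rfl, Finsupp.sum_single_index rfl]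
      ring
  have hU1τ : N.U1 p1 τ σ2
      = (1/p2) * (∑ μ, σ2 μ * N.u1 p1 x μ)
        + (1 - 1/p2) * (∑ μ, σ2 μ * N.u1 p1 (fun _ => 0) μ) := by
    unfold Network.U1 Network.expFA
    have hss : ∀ (yF : N.Flow) (w : ℝ),
        (Finsupp.single yF w).sum (fun y w => w * ∑ μ, σ2 μ * N.u1 p1 y.1 μ)
          = w * ∑ μ, σ2 μ * N.u1 p1 yF.1 μ :=
      fun yF w => Finsupp.sum_single_index (zero_mul _)
    rw [hτdef,
      Finsupp.sum_add_index'
        (fun (a : N.Flow) => zero_mul (∑ μ, σ2 μ * N.u1 p1 a.1 μ))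
        (fun (a : N.Flow) b c => add_mul b c (∑ μ, σ2 μ * N.u1 p1 a.1 μ)),
      hss, hss]
  have hz0 : (∑ μ, σ2 μ * N.u1 p1 (fun _ => 0) μ) = 0 :=
    Finset.sum_eq_zero fun μ _ => by rw [Network.u1_zero, mul_zero]
  have hxdev : p1 * N.Theta - p1 * t - N.alpha * N.Theta ≤ ∑ μ, σ2 μ * N.u1 p1 x μ := by
    have hterm : ∀ μ ∈ (Finset.univ : Finset (Finset N.E)),
        σ2 μ * (p1 * (N.Theta - N.C2 μ) - N.alpha * N.Theta) ≤ σ2 μ * N.u1 p1 x μ := by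
      intro μ _
      have h1 : N.Theta - N.C2 μ ≤ N.effVal x μ := by
        have h := Network.val_sub_effVal_le_C2 hfx μ
        rw [hvx] at h; linarith
      have h2 : p1 * (N.Theta - N.C2 μ) ≤ p1 * N.effVal x μ :=
        mul_le_mul_of_nonneg_left h1 (le_of_lt hp1')
      have h3 : p1 * (N.Theta - N.C2 μ) - N.alpha * N.Theta ≤ N.u1 p1 x μ := by
        unfold Network.u1; linarith
      exact mul_le_mul_of_nonneg_left h3 (hM2.1 μ)
    have hsum : ∑ μ, σ2 μ * (p1 * (N.Theta - N.C2 μ) - N.alpha * N.Theta)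
        = p1 * N.Theta - p1 * t - N.alpha * N.Theta := by
      have h' : ∀ μ ∈ (Finset.univ : Finset (Finset N.E)),
          σ2 μ * (p1 * (N.Theta - N.C2 μ) - N.alpha * N.Theta)
          = (p1 * N.Theta - N.alpha * N.Theta) * σ2 μ - p1 * (σ2 μ * N.C2 μ) :=
        fun μ _ => by ring
      rw [Finset.sum_congr rfl h', Finset.sum_sub_distrib, ← Finset.mul_sum, hM2.2,
        mul_one, ← Finset.mul_sum, htdef]
      ring
    calc p1 * N.Theta - p1 * t - N.alpha * N.Theta
        = ∑ μ, σ2 μ * (p1 * (N.Theta - N.C2 μ) - N.alpha * N.Theta) := hsum.symm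
      _ ≤ ∑ μ, σ2 μ * N.u1 p1 x μ := Finset.sum_le_sum hterm
  have hU1dev : (1/p2) * (p1 * N.Theta - p1 * t - N.alpha * N.Theta) ≤ N.U1 p1 σ1 σ2 := by
    have h := hD τ hτmixed
    rw [hU1τ, hz0, mul_zero, add_zero] at h
    have h2 := mul_le_mul_of_nonneg_left hxdev hinv0
    linarith
  -- the strategically-zero-sum identity
  have huid : ∀ (y : Finset N.E → ℝ) (μ : Finset N.E),
      N.u1 p1 y μ + (p1/p2) * N.u2 p2 y μ
        = p1 * N.val y - N.C1 y - (p1/p2) * N.C2 μ := by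
    intro y μ
    unfold Network.u1 Network.u2
    field_simp
    ring
  have hIDE : N.U1 p1 σ1 σ2 + (p1/p2) * N.U2 p2 σ1 σ2
      = p1 * V - W1 - (p1/p2) * t := by
    rw [hVdef, hWdef, htdef]
    unfold Network.U1 Network.U2 Network.expFA
    simp only [Finsupp.sum]
    rw [Finset.mul_sum, ← Finset.sum_add_distrib]
    have hrow : ∀ y ∈ σ1.support,
        σ1 y * (∑ μ, σ2 μ * N.u1 p1 y.1 μ)
          + (p1/p2) * (σ1 y * (∑ μ, σ2 μ * N.u2 p2 y.1 μ))
        = p1 * (σ1 y * N.val y.1) - σ1 y * N.C1 y.1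
          - σ1 y * ((p1/p2) * ∑ μ, σ2 μ * N.C2 μ) := by
      intro y _
      have hinner : (∑ μ, σ2 μ * N.u1 p1 y.1 μ) + (p1/p2) * (∑ μ, σ2 μ * N.u2 p2 y.1 μ)
          = (p1 * N.val y.1 - N.C1 y.1) - (p1/p2) * ∑ μ, σ2 μ * N.C2 μ := by
        rw [Finset.mul_sum, ← Finset.sum_add_distrib]
        have hterm : ∀ μ ∈ (Finset.univ : Finset (Finset N.E)),
            σ2 μ * N.u1 p1 y.1 μ + (p1/p2) * (σ2 μ * N.u2 p2 y.1 μ)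
            = (p1 * N.val y.1 - N.C1 y.1) * σ2 μ - (p1/p2) * (σ2 μ * N.C2 μ) := by
          intro μ _
          linear_combination σ2 μ * huid y.1 μ
        rw [Finset.sum_congr rfl hterm, Finset.sum_sub_distrib, ← Finset.mul_sum, hM2.2,
          mul_one, ← Finset.mul_sum]
      linear_combination σ1 y * hinner
    rw [Finset.sum_congr rfl hrow, Finset.sum_sub_distrib, Finset.sum_sub_distrib,
      ← Finset.mul_sum, ← Finset.sum_mul, hs1, one_mul]
  -- expected cost at least alpha * expected value
  have hαV : N.alpha * V ≤ W1 := by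
    rw [hVdef, hWdef, Finset.mul_sum]
    refine Finset.sum_le_sum fun y _ => ?_
    calc N.alpha * (σ1 y * N.val y.1) = σ1 y * (N.alpha * N.val y.1) := by ring
      _ ≤ σ1 y * N.C1 y.1 :=
          mul_le_mul_of_nonneg_left (Network.alpha_val_le_C1 y.2) (hM1.1 y)
  -- final arithmetic
  have hce : 0 < N.c e := hc e he
  have hpa : 0 < p1 - N.alpha := by linarith
  have hA3 : p1 * N.Theta - p1 * t - N.alpha * N.Theta ≤ p2 * N.U1 p1 σ1 σ2 := by
    have h := mul_le_mul_of_nonneg_left hU1dev (le_of_lt hp2')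
    calc p1 * N.Theta - p1 * t - N.alpha * N.Theta
        = p2 * ((1/p2) * (p1 * N.Theta - p1 * t - N.alpha * N.Theta)) := by
          field_simp
      _ ≤ p2 * N.U1 p1 σ1 σ2 := h
  have h4 : p2 * N.U1 p1 σ1 σ2 + p1 * N.U2 p2 σ1 σ2
      = p1 * (p2 * V) - p2 * W1 - p1 * t := by
    have h' := congrArg (fun r => p2 * r) hIDE
    have e1 : p2 * (N.U1 p1 σ1 σ2 + (p1/p2) * N.U2 p2 σ1 σ2)
        = p2 * N.U1 p1 σ1 σ2 + p1 * N.U2 p2 σ1 σ2 := by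
      field_simp
    have e2 : p2 * (p1 * V - W1 - (p1/p2) * t) = p1 * (p2 * V) - p2 * W1 - p1 * t := by
      field_simp
    rw [e1, e2] at h'
    exact h'
  have h5 : p1 * (p2 * V - (N.Theta - N.c e)) ≤ p1 * N.U2 p2 σ1 σ2 :=
    mul_le_mul_of_nonneg_left hBK (le_of_lt hp1')
  have h6 : 0 ≤ p1 * N.U2 p2 σ1 σ2 := mul_nonneg (le_of_lt hp1') hB0
  have h7 : (p1 - N.alpha) * N.Theta ≤ p1 * (p2 * V) - p2 * W1 := by linarith [hA3, h4, h6]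
  have h10 : p2 * (N.alpha * V) ≤ p2 * W1 :=
    mul_le_mul_of_nonneg_left hαV (le_of_lt hp2')
  have h11 : (p1 - N.alpha) * N.Theta ≤ (p1 - N.alpha) * (p2 * V) := by linarith [h7, h10]
  have hE2 : N.Theta ≤ p2 * V := le_of_mul_le_mul_left h11 hpa
  have h8 : p2 * W1 ≤ N.alpha * N.Theta - p1 * N.c e := by linarith [hA3, h4, h5]
  have h12 : N.alpha * N.Theta ≤ N.alpha * (p2 * V) := mul_le_mul_of_nonneg_left hE2 hα
  linarith [h8, h10, h12, mul_pos hp1' hce]
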